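/- Let H_{sa} > 0 for each pair (s,a) with a ≠ π*(s), and H* > 0. Consider the optimization problem: minimize over ω in the simplex on S×A, subject to ω_{s,π*(s)} = ω₀ for all s, the objective max_{s,a≠π*(s)} H_{sa}/ω_{sa} + H*/(S·ω₀). Then the optimum is attained at ω̄_{sa} = H_{sa}/(Σ H + √(H*·Σ H)) for a ≠ π*(s) and ω̄_{s,π*(s)} = (1/S)·√(H*·Σ H)/(Σ H + √(H*·Σ H)) where Σ H = Σ_{s,a≠π*(s)} H_{sa}, and the optimal value is Σ H + H* + 2√(H*·Σ H), which is at most 2(Σ H + H*). -/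

import Mathlib

open Finset Real

lemma alloc_sum_split {S A : Type*} [Fintype S] [Fintype A] [DecidableEq A]
    (πstar : S → A) (f : S → A → ℝ) :
    ∑ s, ∑ a, f s a =
      (∑ s : S, f s (πstar s)) +
        ∑ q ∈ Finset.univ.filter (fun q : S × A => q.2 ≠ πstar q.1), f q.1 q.2 := by
  have h1 : ∑ q ∈ Finset.univ.filter (fun q : S × A => q.2 ≠ πstar q.1), f q.1 q.2
      = ∑ s, ∑ a ∈ Finset.univ.erase (πstar s), f s a := by
    rw [← Finset.univ_product_univ, Finset.sum_filter, Finset.sum_product]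
    refine Finset.sum_congr rfl fun s _ => ?_
    rw [← Finset.sum_filter]
    congr 1
    exact Finset.filter_ne' Finset.univ (πstar s)
  rw [h1, ← Finset.sum_add_distrib]
  refine Finset.sum_congr rfl fun s _ => ?_
  exact (Finset.add_sum_erase _ _ (Finset.mem_univ _)).symm

theorem allocation_optimum {S A : Type*} [Fintype S] [Fintype A] [Nonempty S] [Nonempty A]
    [DecidableEq A]
    (πstar : S → A) (H : S → A → ℝ) (Hstar : ℝ)
    (hH : ∀ s a, a ≠ πstar s → 0 < H s a) (hHstar : 0 < Hstar)
    (hsub : (Finset.univ.filter (fun q : S × A => q.2 ≠ πstar q.1)).Nonempty) :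
    let Sc : ℝ := (Fintype.card S : ℝ)
    let sumH : ℝ := ∑ q ∈ Finset.univ.filter (fun q : S × A => q.2 ≠ πstar q.1), H q.1 q.2
    let D : ℝ := sumH + Real.sqrt (Hstar * sumH)
    let ωbar : S → A → ℝ := fun s a =>
      if a = πstar s then (Real.sqrt (Hstar * sumH) / Sc) / D else H s a / D
    let ωbar0 : ℝ := (Real.sqrt (Hstar * sumH) / Sc) / D
    let F : (S → A → ℝ) → ℝ → ℝ := fun ω ω0 =>
      (Finset.univ.filter (fun q : S × A => q.2 ≠ πstar q.1)).sup' hsub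
          (fun q => H q.1 q.2 / ω q.1 q.2)
        + Hstar / (Sc * ω0)
    -- ω̄ is a feasible allocation
    ((∀ s a, 0 < ωbar s a) ∧ (∑ s, ∑ a, ωbar s a) = 1 ∧ (∀ s, ωbar s (πstar s) = ωbar0))
    -- ω̄ is optimal among feasible allocations
    ∧ (∀ (ω : S → A → ℝ) (ω0 : ℝ), (∀ s a, 0 < ω s a) → (∑ s, ∑ a, ω s a) = 1 →
        (∀ s, ω s (πstar s) = ω0) → F ωbar ωbar0 ≤ F ω ω0)
    -- the optimal value
    ∧ F ωbar ωbar0 = sumH + Hstar + 2 * Real.sqrt (Hstar * sumH)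
    ∧ sumH + Hstar + 2 * Real.sqrt (Hstar * sumH) ≤ 2 * (sumH + Hstar) := by
  intro Sc sumH D ωbar ωbar0 F
  set T := Finset.univ.filter (fun q : S × A => q.2 ≠ πstar q.1) with hT
  have hmemT : ∀ q : S × A, q ∈ T ↔ q.2 ≠ πstar q.1 := by
    intro q; simp [hT]
  have hsumH : 0 < sumH := by
    refine Finset.sum_pos (fun q hq => hH q.1 q.2 ((hmemT q).1 hq)) hsub
  set r := Real.sqrt (Hstar * sumH) with hrdef
  have hr : 0 < r := Real.sqrt_pos.2 (mul_pos hHstar hsumH)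
  have hr2 : r ^ 2 = Hstar * sumH := Real.sq_sqrt (mul_pos hHstar hsumH).le
  have hD : 0 < D := by positivity
  have hDeq : D = sumH + r := rfl
  have hSc : 0 < Sc := by
    show (0 : ℝ) < (Fintype.card S : ℝ)
    exact_mod_cast Fintype.card_pos
  have hcm : ∀ y : ℝ, Sc * (y / Sc / D) = y / D := by
    intro y
    rw [div_div, ← mul_div_assoc, mul_div_mul_left _ _ hSc.ne']
  have hω0pos : 0 < ωbar0 := by positivity
  -- value of the sup' at ωbar
  have hsup : T.sup' hsub (fun q => H q.1 q.2 / ωbar q.1 q.2) = D := by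
    have : ∀ q ∈ T, H q.1 q.2 / ωbar q.1 q.2 = D := by
      intro q hq
      have hne := (hmemT q).1 hq
      have hHq : 0 < H q.1 q.2 := hH q.1 q.2 hne
      simp only [ωbar, if_neg hne]
      rw [div_div_eq_mul_div, mul_comm, mul_div_assoc, div_self hHq.ne', mul_one]
    rw [Finset.sup'_congr hsub rfl this, Finset.sup'_const]
  have hScω0 : Sc * ωbar0 = r / D := hcm r
  have hval : F ωbar ωbar0 = sumH + Hstar + 2 * r := by
    simp only [F, hsup, hScω0]
    rw [div_div_eq_mul_div, mul_comm Hstar D]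
    have h2 : D * Hstar / r = r + Hstar := by
      rw [div_eq_iff hr.ne', hDeq]
      nlinarith [hr2]
    rw [h2]
    calc _ = D + (r + Hstar) := by rw [← hsup]
      _ = _ := by rw [hDeq]; ring
  refine ⟨⟨?_, ?_, ?_⟩, ?_, hval, ?_⟩
  · -- positivity
    intro s a
    by_cases h : a = πstar s
    · simp only [ωbar, if_pos h]; positivity
    · simp only [ωbar, if_neg h]
      have := hH s a h
      positivity
  · -- sums to one
    rw [alloc_sum_split πstar ωbar]
    have h1 : (∑ s : S, ωbar s (πstar s)) = r / D := by
      have hc : ∀ s : S, ωbar s (πstar s) = (r / Sc) / D := fun s => by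
        simp only [ωbar, if_pos rfl]; rfl
      rw [Finset.sum_congr rfl (fun s _ => hc s), Finset.sum_const, Finset.card_univ,
        nsmul_eq_mul]
      exact hcm r
    have h2 : (∑ q ∈ T, ωbar q.1 q.2) = sumH / D := by
      show (∑ q ∈ T, ωbar q.1 q.2) = (∑ q ∈ T, H q.1 q.2) / D
      rw [Finset.sum_div]
      refine Finset.sum_congr rfl fun q hq => ?_
      simp only [ωbar, if_neg ((hmemT q).1 hq)]
    rw [h1, h2, ← add_div, add_comm]
    exact div_self hD.ne'
  · intro s; simp only [ωbar, if_pos rfl]; rfl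
  · -- optimality
    intro ω ω0 hpos hsum hω0
    rw [hval]
    set M := T.sup' hsub (fun q => H q.1 q.2 / ω q.1 q.2) with hMdef
    have hω0p : 0 < ω0 := by
      obtain ⟨s⟩ := (inferInstance : Nonempty S)
      rw [← hω0 s]; exact hpos s _
    have hMpos : 0 < M := by
      obtain ⟨q0, hq0⟩ := hsub
      have h1 : 0 < H q0.1 q0.2 / ω q0.1 q0.2 :=
        div_pos (hH _ _ ((hmemT q0).1 hq0)) (hpos _ _)
      exact lt_of_lt_of_le h1
        (Finset.le_sup' (fun q : S × A => H q.1 q.2 / ω q.1 q.2) hq0)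
    have hωlb : ∀ q ∈ T, H q.1 q.2 / M ≤ ω q.1 q.2 := by
      intro q hq
      have h1 : H q.1 q.2 / ω q.1 q.2 ≤ M :=
        Finset.le_sup' (fun q : S × A => H q.1 q.2 / ω q.1 q.2) hq
      rw [div_le_iff₀ (hpos _ _)] at h1
      rw [div_le_iff₀ hMpos]
      linarith [h1, mul_comm M (ω q.1 q.2)]
    have hsumlb : sumH / M ≤ ∑ q ∈ T, ω q.1 q.2 := by
      show (∑ q ∈ T, H q.1 q.2) / M ≤ ∑ q ∈ T, ω q.1 q.2
      rw [Finset.sum_div]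
      exact Finset.sum_le_sum hωlb
    have hsplit : Sc * ω0 + (∑ q ∈ T, ω q.1 q.2) = 1 := by
      rw [← hsum, alloc_sum_split πstar ω]
      congr 1
      rw [Finset.sum_congr rfl (fun s _ => hω0 s), Finset.sum_const, Finset.card_univ,
        nsmul_eq_mul, mul_comm]
    have hkey : Sc * ω0 ≤ 1 - sumH / M := by linarith
    have hScω0p : 0 < Sc * ω0 := mul_pos hSc hω0p
    have hMgt : sumH < M := by
      have h1 : sumH / M < 1 := by linarith
      rwa [div_lt_one hMpos] at h1
    set x := M - sumH with hxdef
    have hx : 0 < x := by simp only [hxdef]; linarith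
    have hMx : M = sumH + x := by rw [hxdef]; ring
    have h1 : 1 - sumH / M = x / M := by
      rw [hxdef, sub_div, div_self hMpos.ne']
    have h2 : Hstar / (1 - sumH / M) ≤ Hstar / (Sc * ω0) := by
      apply div_le_div_of_nonneg_left hHstar.le hScω0p hkey
    have h3 : Hstar / (1 - sumH / M) = Hstar * M / x := by
      rw [h1, div_div_eq_mul_div]
    have h4 : sumH + Hstar + 2 * r ≤ M + Hstar * M / x := by
      rw [← sub_le_iff_le_add', le_div_iff₀ hx]
      nlinarith [sq_nonneg (x - r), hr2, hMx]
    have h5 : F ω ω0 = M + Hstar / (Sc * ω0) := rfl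
    rw [h5]
    calc sumH + Hstar + 2 * r ≤ M + Hstar * M / x := h4
      _ = M + Hstar / (1 - sumH / M) := by rw [h3]
      _ ≤ M + Hstar / (Sc * ω0) := by linarith
  · -- final bound
    have h1 : r = Real.sqrt Hstar * Real.sqrt sumH := Real.sqrt_mul hHstar.le _
    nlinarith [Real.sq_sqrt hHstar.le, Real.sq_sqrt hsumH.le,
      sq_nonneg (Real.sqrt Hstar - Real.sqrt sumH)]
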